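/- Let ζ : S' × A' → {0,1} be a filter with ζ(s, a_abs) = 0 and ζ(s_abs, a) = 0, and define the projection Ξ mapping a policy π to Ξ(π) with Ξ(π)(a|s) = ζ(s,a)π(a|s) for a ∈ A and Ξ(π)(a_abs|s) = Σ_{a'} π(a'|s)(1 − ζ(s,a')). Then in the absorbing-augmented MDP M', v^π ≥ v^{Ξ(π)}, with equality if ζ(s,a) = 1 for every state-action pair (s,a) reachable under π. -/
import Mathlib


open scoped BigOperators

/-- A finite Markov decision process with transition probabilities `P`,
reward function `r`, discount factor `γ`, and initial distribution `ρ`. -/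
structure MDP (S A : Type) [Fintype S] [Fintype A] where
  P : S → A → S → ℝ
  r : S → A → ℝ
  γ : ℝ
  ρ : S → ℝ

variable {S A : Type} [Fintype S] [Fintype A]

/-- `P` has nonnegative rows summing to one, `ρ` is a distribution, `0 ≤ γ < 1`. -/
def IsValidMDP (M : MDP S A) : Prop :=
  (∀ s a s', 0 ≤ M.P s a s') ∧ (∀ s a, ∑ s' : S, M.P s a s' = 1) ∧
  (∀ s, 0 ≤ M.ρ s) ∧ (∑ s : S, M.ρ s = 1) ∧ 0 ≤ M.γ ∧ M.γ < 1

/-- A (stationary, stochastic) policy. -/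
def IsPolicy (π : S → A → ℝ) : Prop :=
  (∀ s a, 0 ≤ π s a) ∧ ∀ s, ∑ a : A, π s a = 1

/-- Marginal state distribution at step `h` under policy `π`. -/
noncomputable def stateDist (M : MDP S A) (π : S → A → ℝ) : ℕ → S → ℝ
  | 0 => M.ρ
  | h + 1 => fun s' => ∑ s : S, ∑ a : A, stateDist M π h s * π s a * M.P s a s'

/-- Expected discounted return of `π` from the initial distribution. -/
noncomputable def value (M : MDP S A) (π : S → A → ℝ) : ℝ :=
  ∑' h : ℕ, M.γ ^ h * ∑ s : S, ∑ a : A, stateDist M π h s * π s a * M.r s a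

/-- State-action distribution at step `h` under `π`, starting from `init`. -/
noncomputable def saDist (M : MDP S A) (π : S → A → ℝ) (init : S × A → ℝ) :
    ℕ → S × A → ℝ
  | 0 => init
  | h + 1 => fun p => ∑ q : S × A, saDist M π init h q * M.P q.1 q.2 p.1 * π p.1 p.2

open Classical in
/-- Action-value function `Q^π(s,a)`: discounted sum of expected rewards when
starting from the state-action pair `(s, a)` and following `π` afterwards. -/
noncomputable def Qf (M : MDP S A) (π : S → A → ℝ) (s : S) (a : A) : ℝ :=
  ∑' h : ℕ, M.γ ^ h * ∑ p : S × A,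
    saDist M π (fun q => if q = (s, a) then 1 else 0) h p * M.r p.1 p.2

/-- State-value function `V^π(s)`. -/
noncomputable def Vf (M : MDP S A) (π : S → A → ℝ) (s : S) : ℝ :=
  ∑ a : A, π s a * Qf M π s a

/-- The absorbing-augmented MDP `M'`: the extra state `none = s_abs` and extra
action `none = a_abs` give zero reward and lead deterministically to `s_abs`. -/
noncomputable def absorb (M : MDP S A) : MDP (Option S) (Option A) where
  P := fun s a s' =>
    match s, a with
    | some s0, some a0 => (match s' with | some t => M.P s0 a0 t | none => 0)
    | _, _ => (match s' with | none => 1 | some _ => 0)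
  r := fun s a =>
    match s, a with
    | some s0, some a0 => M.r s0 a0
    | _, _ => 0
  γ := M.γ
  ρ := fun s => match s with | some s0 => M.ρ s0 | none => 0

/-- The ζ-constrained policy projection `Ξ`: it keeps the probability
`ζ(s,a)·π(a|s)` on supported actions `a ∈ A` and sends all remaining mass
to the absorbing action `a_abs = none`. -/
noncomputable def proj (ζ : Option S → Option A → ℝ) (π : Option S → Option A → ℝ) :
    Option S → Option A → ℝ :=
  fun s a =>
    match a with
    | some _ => ζ s a * π s a
    | none => ∑ a' : Option A, π s a' * (1 - ζ s a')

lemma stateDist_nonneg' (M : MDP S A) (hP : ∀ s a s', 0 ≤ M.P s a s')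
    (hρ : ∀ s, 0 ≤ M.ρ s) (π : S → A → ℝ) (hπ0 : ∀ s a, 0 ≤ π s a) :
    ∀ h s, 0 ≤ stateDist M π h s := by
  intro h
  induction h with
  | zero => exact hρ
  | succ h ih =>
    intro s'
    show (0:ℝ) ≤ ∑ s : S, ∑ a : A, stateDist M π h s * π s a * M.P s a s'
    refine Finset.sum_nonneg fun s _ => Finset.sum_nonneg fun a _ => ?_
    exact mul_nonneg (mul_nonneg (ih s) (hπ0 s a)) (hP s a s')

lemma stateDist_sum_one' (M : MDP S A) (hProw : ∀ s a, ∑ s' : S, M.P s a s' = 1)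
    (hρ : ∑ s : S, M.ρ s = 1) (π : S → A → ℝ) (hπsum : ∀ s, ∑ a : A, π s a = 1) :
    ∀ h, ∑ s : S, stateDist M π h s = 1 := by
  intro h
  induction h with
  | zero => exact hρ
  | succ h ih =>
    show (∑ s' : S, ∑ s : S, ∑ a : A, stateDist M π h s * π s a * M.P s a s') = 1
    have h1 : (∑ s' : S, ∑ s : S, ∑ a : A, stateDist M π h s * π s a * M.P s a s')
        = ∑ s : S, ∑ a : A, stateDist M π h s * π s a * ∑ s' : S, M.P s a s' := by
      rw [Finset.sum_comm]
      refine Finset.sum_congr rfl fun s _ => ?_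
      rw [Finset.sum_comm]
      refine Finset.sum_congr rfl fun a _ => ?_
      rw [Finset.mul_sum]
    rw [h1]
    simp only [hProw, mul_one]
    have h2 : ∀ s : S, (∑ a : A, stateDist M π h s * π s a) = stateDist M π h s := by
      intro s
      rw [← Finset.mul_sum, hπsum, mul_one]
    simp only [h2, ih]

/-- In the absorbing-augmented MDP `M'`, projecting a policy
with `Ξ` can only decrease its value, with equality when `ζ = 1` on every
state-action pair reachable under `π`. -/
theorem value_proj_le_value (M : MDP S A) (hM : IsValidMDP M)
    (hr : ∀ s a, 0 ≤ M.r s a)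
    (ζ : Option S → Option A → ℝ)
    (hζ01 : ∀ s a, ζ s a = 0 ∨ ζ s a = 1)
    (hζa : ∀ s, ζ s none = 0) (hζs : ∀ a, ζ none a = 0)
    (π : Option S → Option A → ℝ) (hπ : IsPolicy π) :
    value (absorb M) (proj ζ π) ≤ value (absorb M) π ∧
      ((∀ h s a, 0 < stateDist (absorb M) π h s * π s a → ζ s a = 1) →
        value (absorb M) π = value (absorb M) (proj ζ π)) := by
  classical
  obtain ⟨hP0, hProw, hρ0, hρ1, hγ0, hγ1⟩ := hM
  obtain ⟨hπ0, hπ1⟩ := hπ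
  have hζ0 : ∀ s a, 0 ≤ ζ s a := fun s a => by rcases hζ01 s a with h | h <;> simp [h]
  have hζ1 : ∀ s a, ζ s a ≤ 1 := fun s a => by rcases hζ01 s a with h | h <;> simp [h]
  -- basic facts about the absorbing MDP
  have hP'0 : ∀ s a s', 0 ≤ (absorb M).P s a s' := by
    intro s a s'
    rcases s with _ | s0 <;> rcases a with _ | a0 <;> rcases s' with _ | t <;>
      simp [absorb] <;> exact hP0 _ _ _
  have hProw' : ∀ s a, ∑ s' : Option S, (absorb M).P s a s' = 1 := by
    intro s a
    rcases s with _ | s0 <;> rcases a with _ | a0 <;>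
      simp [absorb, Fintype.sum_option, hProw]
  have hρ'0 : ∀ s, 0 ≤ (absorb M).ρ s := by
    intro s; rcases s with _ | s0 <;> simp [absorb] <;> exact hρ0 _
  have hρ'1 : ∑ s : Option S, (absorb M).ρ s = 1 := by
    simp [absorb, Fintype.sum_option, hρ1]
  have hr'0 : ∀ s a, 0 ≤ (absorb M).r s a := by
    intro s a
    rcases s with _ | s0 <;> rcases a with _ | a0 <;> simp [absorb] <;> exact hr _ _
  have hγ'0 : (0:ℝ) ≤ (absorb M).γ := hγ0
  -- the projected policy is nonnegative
  have hσ0 : ∀ s a, 0 ≤ proj ζ π s a := by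
    intro s a
    rcases a with _ | a0
    · show (0:ℝ) ≤ ∑ a' : Option A, π s a' * (1 - ζ s a')
      refine Finset.sum_nonneg fun a' _ => mul_nonneg (hπ0 s a') ?_
      linarith [hζ1 s a']
    · exact mul_nonneg (hζ0 s (some a0)) (hπ0 s (some a0))
  have hσle : ∀ s a0, proj ζ π s (some a0) ≤ π s (some a0) := by
    intro s a0
    show ζ s (some a0) * π s (some a0) ≤ π s (some a0)
    nlinarith [hζ0 s (some a0), hζ1 s (some a0), hπ0 s (some a0)]
  have hDσ0 := stateDist_nonneg' (absorb M) hP'0 hρ'0 (proj ζ π) hσ0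
  have hDπ0 := stateDist_nonneg' (absorb M) hP'0 hρ'0 π hπ0
  have hDπ1 := stateDist_sum_one' (absorb M) hProw' hρ'1 π hπ1
  -- key pointwise comparison of state distributions on non-absorbing states
  have key : ∀ h s0, stateDist (absorb M) (proj ζ π) h (some s0)
      ≤ stateDist (absorb M) π h (some s0) := by
    intro h
    induction h with
    | zero => intro s0; exact le_refl _
    | succ h ih =>
      intro t
      show (∑ s : Option S, ∑ a : Option A,
          stateDist (absorb M) (proj ζ π) h s * proj ζ π s a * (absorb M).P s a (some t))
        ≤ ∑ s : Option S, ∑ a : Option A,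
          stateDist (absorb M) π h s * π s a * (absorb M).P s a (some t)
      refine Finset.sum_le_sum fun s _ => Finset.sum_le_sum fun a _ => ?_
      rcases s with _ | s0
      · simp [absorb]
      rcases a with _ | a0
      · simp [absorb]
      · refine mul_le_mul_of_nonneg_right ?_ (hP'0 _ _ _)
        exact mul_le_mul (ih s0) (hσle _ _) (hσ0 _ _) (hDπ0 h (some s0))
  -- pointwise comparison of expected rewards
  have hterm : ∀ h, (∑ s : Option S, ∑ a : Option A,
        stateDist (absorb M) (proj ζ π) h s * proj ζ π s a * (absorb M).r s a)
      ≤ ∑ s : Option S, ∑ a : Option A,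
        stateDist (absorb M) π h s * π s a * (absorb M).r s a := by
    intro h
    refine Finset.sum_le_sum fun s _ => Finset.sum_le_sum fun a _ => ?_
    rcases s with _ | s0
    · simp [absorb]
    rcases a with _ | a0
    · simp [absorb]
    · refine mul_le_mul_of_nonneg_right ?_ (hr'0 _ _)
      exact mul_le_mul (key h s0) (hσle _ _) (hσ0 _ _) (hDπ0 h (some s0))
  -- bounds for summability
  set C : ℝ := ∑ s0 : S, ∑ a0 : A, M.r s0 a0 with hC
  have hC0 : 0 ≤ C := Finset.sum_nonneg fun s _ => Finset.sum_nonneg fun a _ => hr s a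
  have hr'C : ∀ s a, (absorb M).r s a ≤ C := by
    intro s a
    rcases s with _ | s0 <;> rcases a with _ | a0 <;> simp [absorb]
    · exact hC0
    · exact hC0
    · exact hC0
    · calc M.r s0 a0 ≤ ∑ a : A, M.r s0 a :=
            Finset.single_le_sum (fun a _ => hr s0 a) (Finset.mem_univ a0)
        _ ≤ C := Finset.single_le_sum
            (f := fun s : S => ∑ a : A, M.r s a)
            (fun s _ => Finset.sum_nonneg fun a _ => hr s a) (Finset.mem_univ s0)
  have hRσ0 : ∀ h, 0 ≤ ∑ s : Option S, ∑ a : Option A,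
      stateDist (absorb M) (proj ζ π) h s * proj ζ π s a * (absorb M).r s a := by
    intro h
    refine Finset.sum_nonneg fun s _ => Finset.sum_nonneg fun a _ => ?_
    exact mul_nonneg (mul_nonneg (hDσ0 h s) (hσ0 s a)) (hr'0 s a)
  have hRπC : ∀ h, (∑ s : Option S, ∑ a : Option A,
      stateDist (absorb M) π h s * π s a * (absorb M).r s a) ≤ C := by
    intro h
    calc (∑ s : Option S, ∑ a : Option A,
          stateDist (absorb M) π h s * π s a * (absorb M).r s a)
        ≤ ∑ s : Option S, ∑ a : Option A, stateDist (absorb M) π h s * π s a * C := by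
          refine Finset.sum_le_sum fun s _ => Finset.sum_le_sum fun a _ => ?_
          exact mul_le_mul_of_nonneg_left (hr'C s a)
            (mul_nonneg (hDπ0 h s) (hπ0 s a))
      _ = C := by
          have h2 : ∀ s : Option S, (∑ a : Option A,
              stateDist (absorb M) π h s * π s a * C) = stateDist (absorb M) π h s * C := by
            intro s
            have : ∀ a : Option A, stateDist (absorb M) π h s * π s a * C
                = (stateDist (absorb M) π h s * C) * π s a := fun a => by ring
            simp only [this, ← Finset.mul_sum, hπ1 s, mul_one]
          simp only [h2, ← Finset.sum_mul, hDπ1 h, one_mul]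
  -- summability
  have hgeom : Summable fun h : ℕ => (absorb M).γ ^ h * C :=
    (summable_geometric_of_lt_one hγ0 hγ1).mul_right C
  have hsumπ : Summable (fun h : ℕ => (absorb M).γ ^ h * ∑ s : Option S, ∑ a : Option A,
      stateDist (absorb M) π h s * π s a * (absorb M).r s a) := by
    refine Summable.of_nonneg_of_le (fun h => mul_nonneg (pow_nonneg hγ'0 h)
      (le_trans (hRσ0 h) (hterm h))) (fun h => ?_) hgeom
    exact mul_le_mul_of_nonneg_left (hRπC h) (pow_nonneg hγ'0 h)
  have hsumσ : Summable (fun h : ℕ => (absorb M).γ ^ h * ∑ s : Option S, ∑ a : Option A,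
      stateDist (absorb M) (proj ζ π) h s * proj ζ π s a * (absorb M).r s a) := by
    refine Summable.of_nonneg_of_le (fun h => mul_nonneg (pow_nonneg hγ'0 h) (hRσ0 h))
      (fun h => ?_) hgeom
    exact mul_le_mul_of_nonneg_left (le_trans (hterm h) (hRπC h)) (pow_nonneg hγ'0 h)
  constructor
  · -- the inequality
    refine Summable.tsum_le_tsum (fun h => ?_) hsumσ hsumπ
    exact mul_le_mul_of_nonneg_left (hterm h) (pow_nonneg hγ'0 h)
  · -- equality under the reachability condition
    intro hreach
    have keyEq : ∀ h s0, stateDist (absorb M) π h (some s0)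
        = stateDist (absorb M) (proj ζ π) h (some s0) := by
      intro h
      induction h with
      | zero => intro s0; rfl
      | succ h ih =>
        intro t
        show (∑ s : Option S, ∑ a : Option A,
            stateDist (absorb M) π h s * π s a * (absorb M).P s a (some t))
          = ∑ s : Option S, ∑ a : Option A,
            stateDist (absorb M) (proj ζ π) h s * proj ζ π s a * (absorb M).P s a (some t)
        refine Finset.sum_congr rfl fun s _ => Finset.sum_congr rfl fun a _ => ?_
        rcases s with _ | s0
        · simp [absorb]
        rcases a with _ | a0
        · simp [absorb]
        · rcases hζ01 (some s0) (some a0) with hz | hz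
          · have h0 : stateDist (absorb M) π h (some s0) * π (some s0) (some a0) = 0 := by
              by_contra hne
              have hpos : 0 < stateDist (absorb M) π h (some s0) * π (some s0) (some a0) :=
                lt_of_le_of_ne (mul_nonneg (hDπ0 h _) (hπ0 _ _)) (Ne.symm hne)
              have := hreach h (some s0) (some a0) hpos
              rw [this] at hz; norm_num at hz
            have hσz : proj ζ π (some s0) (some a0) = 0 := by
              show ζ (some s0) (some a0) * π (some s0) (some a0) = 0
              rw [hz, zero_mul]
            rw [h0, zero_mul, hσz, mul_zero, zero_mul]
          · have hσz : proj ζ π (some s0) (some a0) = π (some s0) (some a0) := by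
              show ζ (some s0) (some a0) * π (some s0) (some a0) = π (some s0) (some a0)
              rw [hz, one_mul]
            rw [ih s0, hσz]
    refine tsum_congr fun h => ?_
    congr 1
    refine Finset.sum_congr rfl fun s _ => Finset.sum_congr rfl fun a _ => ?_
    rcases s with _ | s0
    · simp [absorb]
    rcases a with _ | a0
    · simp [absorb]
    · rcases hζ01 (some s0) (some a0) with hz | hz
      · have h0 : stateDist (absorb M) π h (some s0) * π (some s0) (some a0) = 0 := by
          by_contra hne
          have hpos : 0 < stateDist (absorb M) π h (some s0) * π (some s0) (some a0) :=
            lt_of_le_of_ne (mul_nonneg (hDπ0 h _) (hπ0 _ _)) (Ne.symm hne)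
          have := hreach h (some s0) (some a0) hpos
          rw [this] at hz; norm_num at hz
        have hσz : proj ζ π (some s0) (some a0) = 0 := by
          show ζ (some s0) (some a0) * π (some s0) (some a0) = 0
          rw [hz, zero_mul]
        rw [h0, zero_mul, hσz, mul_zero, zero_mul]
      · have hσz : proj ζ π (some s0) (some a0) = π (some s0) (some a0) := by
          show ζ (some s0) (some a0) * π (some s0) (some a0) = π (some s0) (some a0)
          rw [hz, one_mul]
        rw [keyEq h s0, hσz]
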